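/- Let G be a group, V a nonzero complex vector space of finite dimension d, and let T be a projective representation of G on V with factor set γ. Then there exists c : G → ℂˣ such that the rescaled map g ↦ c(g) • T(g) is a projective representation of G on V whose factor set γ′(g,h) = γ(g,h)·c(g)·c(h)·c(g·h)⁻¹ satisfies γ′(g,h)^d = 1 for all g,h ∈ G; that is, the lifts can be chosen so that the factor set takes values in the complex d-th roots of unity. -/

import Mathlib

/-- If `T` is a projective representation with factor set `γ` of `G` on a
nonzero complex vector space `V` of finite dimension `d`, then the lifts can be rescaled
by some `c : G → ℂˣ` so that the rescaled map `g ↦ c g • T g` is a projective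
representation whose factor set `γ'(g,h) = γ(g,h)·c(g)·c(h)·c(g·h)⁻¹` takes values in
the complex `d`-th roots of unity. -/
theorem lifts_can_be_chosen_with_root_of_unity_factorSet
    {G V : Type*} [Group G] [AddCommGroup V] [Module ℂ V] [Nontrivial V]
    [FiniteDimensional ℂ V] (d : ℕ) (hd : d = Module.finrank ℂ V)
    (T : G → (V ≃ₗ[ℂ] V)) (γ : G → G → ℂˣ)
    (hT : ∀ g h : G, (T g).toLinearMap ∘ₗ (T h).toLinearMap
        = (γ g h : ℂ) • (T (g * h)).toLinearMap) :
    ∃ c : G → ℂˣ,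
      (∀ g h : G, ((c g : ℂ) • (T g).toLinearMap) ∘ₗ ((c h : ℂ) • (T h).toLinearMap)
          = ((γ g h * c g * c h * (c (g * h))⁻¹ : ℂˣ) : ℂ) •
              ((c (g * h) : ℂ) • (T (g * h)).toLinearMap)) ∧
      ∀ g h : G, (γ g h * c g * c h * (c (g * h))⁻¹) ^ d = 1 := by
  have hd0 : 0 < d := hd ▸ Module.finrank_pos
  -- unit-valued determinant
  set u : G → ℂˣ := fun g => LinearEquiv.det (T g) with hu
  -- choose d-th roots of (u g)⁻¹
  have hroot : ∀ g : G, ∃ z : ℂˣ, (z : ℂˣ) ^ d = (u g)⁻¹ := by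
    intro g
    obtain ⟨z, hz⟩ := Complex.isAlgClosed.exists_pow_nat_eq (((u g)⁻¹ : ℂˣ) : ℂ) hd0
    have hz0 : z ≠ 0 := by
      intro h
      rw [h, zero_pow hd0.ne'] at hz
      exact (Units.ne_zero _) hz.symm
    refine ⟨Units.mk0 z hz0, ?_⟩
    ext
    simpa using hz
  choose c hc using hroot
  -- determinant relation: γ^d * u(g*h) = u g * u h
  have hdet : ∀ g h : G, (γ g h) ^ d * u (g * h) = u g * u h := by
    intro g h
    have := congrArg LinearMap.det (hT g h)
    rw [LinearMap.det_comp, LinearMap.det_smul] at this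
    apply Units.ext
    push_cast
    rw [hu]
    simp only [LinearEquiv.coe_det]
    rw [← hd] at this
    linear_combination -this
  refine ⟨c, ?_, ?_⟩
  · intro g h
    have key : ((γ g h * c g * c h * (c (g * h))⁻¹ : ℂˣ) : ℂ) * (c (g * h) : ℂ)
        = ((γ g h : ℂ) * (c g : ℂ)) * (c h : ℂ) := by
      push_cast
      field_simp
    rw [LinearMap.smul_comp, LinearMap.comp_smul, hT g h, smul_smul, smul_smul, smul_smul, key]
    congr 1
    ring
  · intro g h
    have : (γ g h * c g * c h * (c (g * h))⁻¹) ^ d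
        = γ g h ^ d * c g ^ d * c h ^ d * (c (g * h) ^ d)⁻¹ := by
      rw [mul_pow, mul_pow, mul_pow, inv_pow]
    rw [this, hc, hc, hc, inv_inv]
    have := hdet g h
    rw [show γ g h ^ d * (u g)⁻¹ * (u h)⁻¹ * u (g * h) = γ g h ^ d * u (g * h) / (u g * u h) by
      rw [div_eq_mul_inv, mul_inv]; ac_rfl]
    rw [this]
    exact div_self' _
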